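/- Let B be a commutative Poisson algebra over ℂ and J ⊆ B a Poisson ideal (an ideal with {J, B} ⊆ J). Then the radical of J is also a Poisson ideal. -/

import Mathlib

/-- If `B` is a commutative Poisson algebra over `ℂ` (a commutative
`ℂ`-algebra with a bilinear Lie bracket satisfying the Leibniz rule) and `J` is a
Poisson ideal (`{J, B} ⊆ J`), then the radical of `J` is also a Poisson ideal. -/
theorem radical_of_poisson_ideal_is_poisson
    (B : Type*) [CommRing B] [Algebra ℂ B]
    (bracket : B →ₗ[ℂ] B →ₗ[ℂ] B)
    (antisymm : ∀ a b : B, bracket a b = - bracket b a)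
    (jacobi : ∀ a b c : B,
      bracket a (bracket b c) = bracket (bracket a b) c + bracket b (bracket a c))
    (leibniz : ∀ a b c : B, bracket (a * b) c = a * bracket b c + b * bracket a c)
    (J : Ideal B) (hJ : ∀ a ∈ J, ∀ b : B, bracket a b ∈ J) :
    ∀ a ∈ J.radical, ∀ b : B, bracket a b ∈ J.radical := by
  -- bracket of 1 is 0
  have hone : ∀ y : B, bracket (1 : B) y = 0 := by
    intro y
    have h := leibniz 1 1 y
    simp only [one_mul, mul_one] at h
    exact right_eq_add.mp h
  -- bracket of powers
  have hpow : ∀ (x y : B) (m : ℕ),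
      bracket (x ^ (m + 1)) y = ((m : B) + 1) * x ^ m * bracket x y := by
    intro x y m
    induction m with
    | zero => simp
    | succ m ih =>
      have hx : x ^ (m + 1 + 1) = x * x ^ (m + 1) := by ring
      rw [hx, leibniz, ih]
      push_cast
      ring
  intro a ha b
  obtain ⟨n, hn⟩ := ha
  set c := bracket a b with hc
  -- key induction
  have key : ∀ k, k ≤ n → a ^ (n - k) * c ^ (2 * k) ∈ J := by
    intro k
    induction k with
    | zero => intro _; simpa using hn
    | succ k ih =>
      intro hk
      have hk' : k ≤ n := Nat.le_of_succ_le hk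
      have ihk := ih hk'
      obtain ⟨m, hm⟩ : ∃ m, n - k = m + 1 :=
        ⟨n - (k + 1), by omega⟩
      rw [hm] at ihk
      -- bracket of the element is in J
      have h1 : bracket (a ^ (m + 1) * c ^ (2 * k)) b ∈ J := hJ _ ihk b
      have h2 : (bracket (a ^ (m + 1) * c ^ (2 * k)) b) * c
          - (a ^ (m + 1) * c ^ (2 * k)) * ((2 * k : ℕ) * bracket c b) ∈ J :=
        J.sub_mem (J.mul_mem_right c h1) (J.mul_mem_right _ ihk)
      have heq : (bracket (a ^ (m + 1) * c ^ (2 * k)) b) * c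
          - (a ^ (m + 1) * c ^ (2 * k)) * ((2 * k : ℕ) * bracket c b)
          = ((m : B) + 1) * (a ^ (n - (k + 1)) * c ^ (2 * (k + 1))) := by
        rw [leibniz, hpow a b m]
        have hnk : n - (k + 1) = m := by omega
        rw [hnk]
        rcases Nat.eq_zero_or_pos k with hk0 | hkpos
        · subst hk0; simp [hone]; ring
        · obtain ⟨j, hj⟩ : ∃ j, 2 * k = j + 1 := ⟨2 * k - 1, by omega⟩
          rw [show 2 * (k + 1) = (j + 1) + 2 from by omega, hj, hpow c b j]
          push_cast
          ring
      rw [heq] at h2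
      -- divide by m + 1
      have hinv : (algebraMap ℂ B ((m : ℂ) + 1)⁻¹) * (((m : B) + 1)
          * (a ^ (n - (k + 1)) * c ^ (2 * (k + 1)))) ∈ J :=
        J.mul_mem_left _ h2
      have hcancel : (algebraMap ℂ B ((m : ℂ) + 1)⁻¹) * ((m : B) + 1) = 1 := by
        have : ((m : B) + 1) = algebraMap ℂ B ((m : ℂ) + 1) := by
          push_cast
          simp
        rw [this, ← map_mul]
        rw [inv_mul_cancel₀ (Nat.cast_add_one_ne_zero m : ((m : ℂ) + 1) ≠ 0)]
        simp
      have hrw : a ^ (n - (k + 1)) * c ^ (2 * (k + 1))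
          = (algebraMap ℂ B ((m : ℂ) + 1)⁻¹) * (((m : B) + 1)
            * (a ^ (n - (k + 1)) * c ^ (2 * (k + 1)))) := by
        rw [← mul_assoc, hcancel, one_mul]
      rw [hrw]
      exact hinv
  have := key n le_rfl
  simp only [Nat.sub_self, pow_zero, one_mul] at this
  exact ⟨2 * n, this⟩
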